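/- Let G be a connected simple graph on a finite vertex type V such that every two vertices of G are joined by a path of length at most D, let d : Sym2 V → ℝ assign a delay to each edge, let M ∈ ℕ, and let w : Sym2 V → ℕ be supported on a nonempty set of s edges of G with w e ≤ M for every e. Then there exist vertices u, v and walks P and Q, both from u to v in G, such that ∑_{e ∈ edges(Q)} d e − ∑_{e ∈ edges(P)} d e = 2·∑_{e} (w e)·(d e), the length of P is at most s·(D + 1), and the length of Q is at most s·(D + 1) + 2·M·s. (Thus any integer-weighted delay measurement with weights at most M supported on s edges can be realized as half the difference of two end-to-end path delay measurements.) -/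

import Mathlib

open SimpleGraph

private def bounce {V : Type*} {G : SimpleGraph V} {a b : V} (h : G.Adj a b) :
    ℕ → G.Walk a a
  | 0 => Walk.nil
  | n + 1 => Walk.cons h (Walk.cons h.symm (bounce h n))

private lemma bounce_length {V : Type*} {G : SimpleGraph V} {a b : V} (h : G.Adj a b)
    (n : ℕ) : (bounce h n).length = 2 * n := by
  induction n with
  | zero => simp [bounce]
  | succ n ih => simp [bounce, ih]; omega

private lemma bounce_sum {V : Type*} {G : SimpleGraph V} {a b : V} (h : G.Adj a b)
    (d : Sym2 V → ℝ) (n : ℕ) :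
    ((bounce h n).edges.map d).sum = 2 * n * d s(a, b) := by
  induction n with
  | zero => simp [bounce]
  | succ n ih =>
      simp only [bounce, Walk.edges_cons, List.map_cons, List.sum_cons, ih]
      rw [Sym2.eq_swap (a := b) (b := a)]
      push_cast
      ring

private lemma aux_walks {V : Type*} [Nonempty V]
    (G : SimpleGraph V) (D : ℕ)
    (hdiam : ∀ u v : V, ∃ p : G.Walk u v, p.IsPath ∧ p.length ≤ D)
    (d : Sym2 V → ℝ) (M : ℕ) (w : Sym2 V → ℕ) (hM : ∀ e, w e ≤ M)
    (L : List (Sym2 V)) (hL : ∀ e ∈ L, e ∈ G.edgeSet) :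
    ∃ (u v : V) (P Q : G.Walk u v),
      (Q.edges.map d).sum - (P.edges.map d).sum
          = 2 * (L.map (fun e => (w e : ℝ) * d e)).sum ∧
      P.length ≤ L.length * (D + 1) ∧
      Q.length ≤ L.length * (D + 1) + 2 * M * L.length := by
  induction L with
  | nil =>
      obtain ⟨u⟩ := ‹Nonempty V›
      exact ⟨u, u, Walk.nil, Walk.nil, by simp⟩
  | cons e L ih =>
      obtain ⟨u, v, P, Q, hsum, hP, hQ⟩ := ih (fun e he => hL e (List.mem_cons_of_mem _ he))
      have heE : e ∈ G.edgeSet := hL e List.mem_cons_self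
      induction e using Sym2.inductionOn with
      | hf a b =>
        have hab : G.Adj a b := heE
        obtain ⟨p, _, hp⟩ := hdiam a u
        refine ⟨a, v, p.append P, (bounce hab (w s(a, b))).append (p.append Q), ?_, ?_, ?_⟩
        · simp only [Walk.edges_append, List.map_append, List.sum_append, bounce_sum,
            List.map_cons, List.sum_cons]
          rw [show ((Q.edges.map d).sum) = (P.edges.map d).sum
              + 2 * (L.map (fun e => (w e : ℝ) * d e)).sum by linarith [hsum]]
          ring
        · simp only [Walk.length_append, List.length_cons]
          nlinarith [hp, hP]
        · simp only [Walk.length_append, List.length_cons, bounce_length]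
          have hw := hM s(a, b)
          nlinarith [hp, hQ]

theorem frantic_link_measurement {V : Type*} [Fintype V] [DecidableEq V]
    (G : SimpleGraph V) (hconn : G.Connected) (D : ℕ)
    (hdiam : ∀ u v : V, ∃ p : G.Walk u v, p.IsPath ∧ p.length ≤ D)
    (d : Sym2 V → ℝ) (M : ℕ) (w : Sym2 V →₀ ℕ)
    (hsupp : ↑w.support ⊆ G.edgeSet) (hne : w.support.Nonempty)
    (s : ℕ) (hs : w.support.card = s) (hM : ∀ e, w e ≤ M) :
    ∃ (u v : V) (P Q : G.Walk u v),
      (Q.edges.map d).sum - (P.edges.map d).sum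
          = 2 * ∑ e ∈ w.support, (w e : ℝ) * d e ∧
      P.length ≤ s * (D + 1) ∧
      Q.length ≤ s * (D + 1) + 2 * M * s := by
  have : Nonempty V := ⟨hne.choose.out.1⟩
  obtain ⟨u, v, P, Q, h1, h2, h3⟩ := aux_walks G D hdiam d M (fun e => w e) hM
    w.support.toList (fun e he => hsupp (by simpa using he))
  refine ⟨u, v, P, Q, ?_, ?_, ?_⟩
  · rw [h1]
    congr 1
    exact Finset.sum_map_toList _ _
  · simpa [Finset.length_toList, hs] using h2
  · simpa [Finset.length_toList, hs] using h3
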